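/- For the third-order 3-point example (m = 2, η₁ = 1/2, multipoint conditions q(0,t) − c q(1/2,t) = 0, q(1,t) = 0, q_x(1,t) = 0), the determinant of the Dirichlet-to-Neumann system is Δ(λ) = ((α² − α)/(27 i λ⁵)) Σ_{k=0}^{2} α^k ( e^{−i α^k λ} − c e^{−i α^k λ / 2} ), where α = e^{2πi/3}. In particular, Δ(λ) = 0 (for λ ≠ 0) if and only if Σ_{k=0}^2 α^k (e^{−iα^kλ} − c e^{−iα^kλ/2}) = 0. -/

import Mathlib

/-- Third-order 3-point example: the determinant of the Dirichlet-to-Neumann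
system equals ((α²−α)/(27iλ⁵)) Σ_{k=0}^2 αᵏ(e^{−iαᵏλ} − c e^{−iαᵏλ/2}),
and vanishes (λ ≠ 0) iff that sum vanishes. -/
theorem stmt19 (c : ℂ) (α : ℂ)
    (hα : α = Complex.exp (2 * Real.pi * Complex.I / 3))
    (b : Fin 3 → Fin 3 → Fin 3 → ℂ)
    (hb : b = fun j k r =>
      if j = 0 ∧ k = 0 ∧ r = 0 then 1
      else if j = 0 ∧ k = 0 ∧ r = 1 then -c
      else if j = 0 ∧ k = 1 ∧ r = 2 then 1
      else if j = 1 ∧ k = 2 ∧ r = 2 then 1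
      else 0)
    (η : Fin 3 → ℝ) (hη : η = ![0, 1 / 2, 1])
    (B : Fin 3 → Fin 3 → Fin 3 → ℂ → ℂ)
    (hB : ∀ (s k r : Fin 3) (lam : ℂ), B s k r lam =
      (1 / 3) * Complex.exp (Complex.I * α ^ (s : ℕ) * lam * ((η r : ℝ) : ℂ)) *
        (-(b 0 k r) * α ^ (s : ℕ) / lam ^ 2
          + (b 1 k r) * α ^ (2 * (s : ℕ)) / (Complex.I * lam)
          + b 2 k r))
    (Δ : ℂ → ℂ)
    (hΔ : ∀ lam, Δ lam = ∑ j0 : Fin 3, ∑ j1 : Fin 3, ∑ j2 : Fin 3,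
      Matrix.det !![B 0 0 j0 lam, B 0 1 j0 lam, B 0 2 j0 lam;
                    B 1 0 j1 lam, B 1 1 j1 lam, B 1 2 j1 lam;
                    B 2 0 j2 lam, B 2 1 j2 lam, B 2 2 j2 lam]) :
    ∀ lam : ℂ, lam ≠ 0 →
      (Δ lam = ((α ^ 2 - α) / (27 * Complex.I * lam ^ 5)) *
        ∑ k ∈ Finset.range 3, α ^ k *
          (Complex.exp (-Complex.I * α ^ k * lam)
            - c * Complex.exp (-Complex.I * α ^ k * lam / 2)))
      ∧ (Δ lam = 0 ↔
        (∑ k ∈ Finset.range 3, α ^ k *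
          (Complex.exp (-Complex.I * α ^ k * lam)
            - c * Complex.exp (-Complex.I * α ^ k * lam / 2))) = 0) := by
  subst hb hη
  -- basic facts about α
  have hα0 : α ≠ 0 := by rw [hα]; exact Complex.exp_ne_zero _
  have hα1 : α ≠ 1 := by
    rw [hα, Ne, Complex.exp_eq_one_iff]
    rintro ⟨n, hn⟩
    have hπ : (Real.pi : ℂ) ≠ 0 := by exact_mod_cast Real.pi_ne_zero
    have h2 : (2 * Real.pi * Complex.I : ℂ) ≠ 0 := by
      simp [hπ, Complex.I_ne_zero, two_ne_zero]
    field_simp at hn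
    have h3 : (3 * n : ℂ) = 1 := by
      apply mul_right_cancel₀ h2
      linear_combination (-(2 * Real.pi * Complex.I)) * hn
    have : (3 * n : ℤ) = 1 := by exact_mod_cast h3
    omega
  have hα3 : α ^ 3 = 1 := by
    rw [hα, ← Complex.exp_nat_mul]
    rw [show (3 : ℕ) * (2 * Real.pi * Complex.I / 3) = 2 * Real.pi * Complex.I by
      push_cast; ring]
    exact_mod_cast Complex.exp_two_pi_mul_I
  have h1 : α ^ 2 + α + 1 = 0 := by
    have hfac0 : (α - 1) * (α ^ 2 + α + 1) = 0 := by linear_combination hα3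
    rcases mul_eq_zero.mp hfac0 with h | h
    · exact absurd (sub_eq_zero.mp h) hα1
    · exact h
  intro lam hlam
  set F0 := Complex.exp (Complex.I * lam * (1 / 2)) with hF0
  set F1 := Complex.exp (Complex.I * α * lam * (1 / 2)) with hF1
  set F2 := Complex.exp (Complex.I * α ^ 2 * lam * (1 / 2)) with hF2
  have hprod : F0 * F1 * F2 = 1 := by
    rw [hF0, hF1, hF2, ← Complex.exp_add, ← Complex.exp_add,
      show Complex.I * lam * (1 / 2) + Complex.I * α * lam * (1 / 2)
          + Complex.I * α ^ 2 * lam * (1 / 2) = 0 by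
        linear_combination (Complex.I * lam * (1 / 2)) * h1]
    exact Complex.exp_zero
  have e1 : Complex.exp (Complex.I * lam) = F0 * F0 := by
    rw [hF0, ← Complex.exp_add]; congr 1; ring
  have e2 : Complex.exp (Complex.I * α * lam) = F1 * F1 := by
    rw [hF1, ← Complex.exp_add]; congr 1; ring
  have e3 : Complex.exp (Complex.I * α ^ 2 * lam) = F2 * F2 := by
    rw [hF2, ← Complex.exp_add]; congr 1; ring
  have e4 : Complex.exp (-(Complex.I * lam)) = F1 * F1 * (F2 * F2) := by
    rw [hF1, hF2, ← Complex.exp_add, ← Complex.exp_add, ← Complex.exp_add]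
    congr 1; linear_combination (-(Complex.I * lam)) * h1
  have e5 : Complex.exp (-(Complex.I * lam) / 2) = F1 * F2 := by
    rw [hF1, hF2, ← Complex.exp_add]
    congr 1; linear_combination (-(Complex.I * lam) / 2) * h1
  have e6 : Complex.exp (-(Complex.I * α * lam)) = F0 * F0 * (F2 * F2) := by
    rw [hF0, hF2, ← Complex.exp_add, ← Complex.exp_add, ← Complex.exp_add]
    congr 1; linear_combination (-(Complex.I * lam)) * h1
  have e7 : Complex.exp (-(Complex.I * α * lam) / 2) = F0 * F2 := by
    rw [hF0, hF2, ← Complex.exp_add]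
    congr 1; linear_combination (-(Complex.I * lam) / 2) * h1
  have e8 : Complex.exp (-(Complex.I * α ^ 2 * lam)) = F0 * F0 * (F1 * F1) := by
    rw [hF0, hF1, ← Complex.exp_add, ← Complex.exp_add, ← Complex.exp_add]
    congr 1; linear_combination (-(Complex.I * lam)) * h1
  have e9 : Complex.exp (-(Complex.I * α ^ 2 * lam) / 2) = F0 * F1 := by
    rw [hF0, hF1, ← Complex.exp_add]
    congr 1; linear_combination (-(Complex.I * lam) / 2) * h1
  have key : Δ lam = ((α ^ 2 - α) / (27 * Complex.I * lam ^ 5)) *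
      ∑ k ∈ Finset.range 3, α ^ k *
        (Complex.exp (-Complex.I * α ^ k * lam)
          - c * Complex.exp (-Complex.I * α ^ k * lam / 2)) := by
    rw [hΔ]
    simp only [hB, Matrix.det_fin_three, Matrix.cons_val', Matrix.cons_val_zero,
      Matrix.cons_val_one, Matrix.head_cons, Matrix.empty_val', Matrix.cons_val_fin_one,
      Matrix.head_fin_const, Matrix.cons_val_two, Matrix.tail_cons, Matrix.of_apply,
      Fin.sum_univ_three, Fin.isValue, Fin.reduceEq, Fin.val_zero, Fin.val_one, Fin.val_two,
      and_true, and_false, true_and, false_and, if_true, if_false, ite_true, ite_false, and_self,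
      Complex.ofReal_zero, Complex.ofReal_one, Complex.ofReal_div, Complex.ofReal_ofNat,
      mul_zero, zero_mul, zero_div, add_zero, zero_add, mul_one, one_mul, neg_zero, neg_mul,
      Complex.exp_zero, pow_zero, pow_one,
      Finset.sum_range_succ, Finset.sum_range_zero]
    rw [e1, e2, e3, e4, e5, e6, e7, e8, e9]
    linear_combination
      ((F1*F2*c + (-2)*F0*F2*c + F0*F1*c + (-1)*F0*F1^2*F2^2*c + (2)*F0^2*F1*F2^2*c
        + (-1)*F0^2*F1^2*F2*c + α*F1^2*F2^2 + α*F0*F2*c + (-2)*α*F0*F1*c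
        + (-1)*α*F0*F1^2*F2^2*c + (-1)*α*F0^2*F1*F2^2*c + (2)*α*F0^2*F1^2*F2*c
        + (-2)*α^2*F1^2*F2^2 + α^2*F0*F1*c + (2)*α^2*F0*F1^2*F2^2*c + α^2*F0^2*F2^2
        + (-1)*α^2*F0^2*F1*F2^2*c + (-1)*α^2*F0^2*F1^2*F2*c + α^3*F1^2*F2^2
        + (-1)*α^3*F0*F1^2*F2^2*c + (-1)*α^3*F0^2*F2^2 + α^3*F0^2*F1*F2^2*c)
        / (27 * Complex.I * lam ^ 5)) * h1
      + ((F1*F2*c + (-2)*F0*F2*c + F0*F1*c + (2)*α*F1*F2*c + (-1)*α*F0*F2*c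
        + (-1)*α*F0*F1*c) / (27 * Complex.I * lam ^ 5)) * hprod
  refine ⟨key, ?_⟩
  rw [key, mul_eq_zero]
  have hfac : (α ^ 2 - α) / (27 * Complex.I * lam ^ 5) ≠ 0 := by
    apply div_ne_zero
    · intro h
      apply hα1
      have h2 : α * α = α * 1 := by linear_combination h
      simpa using mul_left_cancel₀ hα0 h2
    · exact mul_ne_zero (mul_ne_zero (by norm_num) Complex.I_ne_zero) (pow_ne_zero _ hlam)
  simp [hfac]
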